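/- Fix natural numbers s < s' and suppose Assumption A1 holds for g. Then for every natural number t with s' < t, one has I_{∞,s,s'} ⊆ I_{t,s,s'}; that is, the limiting comparison set is contained in every finite-time comparison set. -/
import Mathlib


/-- The functional cost of candidate change `s` at time `t`, evaluated at mean `μ`:
`f̃_{t,s}(μ) = F(s) + Σ_{i=s+1}^{t} (y i − μ)² + α − β·g(t−s)`. -/
noncomputable def ftilde (y F : ℕ → ℝ) (α β : ℝ) (g : ℕ → ℝ) (t s : ℕ) (μ : ℝ) : ℝ :=
  F s + ∑ i ∈ Finset.Icc (s + 1) t, (y i - μ) ^ 2 + α - β * g (t - s)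

/-- `I_{t,s,s'}`: the set of means on which change `s` beats change `s'` at time `t`. -/
def Iset (y F : ℕ → ℝ) (α β : ℝ) (g : ℕ → ℝ) (t s s' : ℕ) : Set ℝ :=
  {μ : ℝ | ftilde y F α β g t s μ ≤ ftilde y F α β g t s' μ}

/-- `I_{∞,s,s'}`: the limiting comparison set as `t → ∞`. -/
def Iinf (y F : ℕ → ℝ) (s s' : ℕ) : Set ℝ :=
  {μ : ℝ | F s - F s' + ∑ i ∈ Finset.Icc (s + 1) s', (y i - μ) ^ 2 ≤ 0}

/-- under Assumption A1, for fixed `s < s'`, the limiting comparison set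
`I_{∞,s,s'}` is contained in every finite-time comparison set `I_{t,s,s'}` with `t > s'`. -/
theorem Iinf_subset_Iset (y F : ℕ → ℝ) (α β : ℝ) (hβ : 0 ≤ β) (g : ℕ → ℝ)
    (hA1 : ∀ s s' : ℕ, s < s' →
      (∀ t₁ t₂ : ℕ, s' < t₁ → t₁ ≤ t₂ →
        g (t₁ - s') - g (t₁ - s) ≤ g (t₂ - s') - g (t₂ - s)) ∧
      Filter.Tendsto (fun t : ℕ => g (t - s') - g (t - s)) Filter.atTop (nhds 0))
    (s s' : ℕ) (hss' : s < s') :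
    ∀ t : ℕ, s' < t → Iinf y F s s' ⊆ Iset y F α β g t s s' := by
  intro t ht μ hμ
  obtain ⟨hmono, hlim⟩ := hA1 s s' hss'
  -- g (t - s') - g (t - s) ≤ 0
  have hg : g (t - s') - g (t - s) ≤ 0 := by
    refine ge_of_tendsto hlim ?_
    filter_upwards [Filter.eventually_ge_atTop t] with t₂ ht₂
    exact hmono t t₂ ht ht₂
  -- split the sum
  have hsplit : ∑ i ∈ Finset.Icc (s + 1) t, (y i - μ) ^ 2
      = ∑ i ∈ Finset.Icc (s + 1) s', (y i - μ) ^ 2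
        + ∑ i ∈ Finset.Icc (s' + 1) t, (y i - μ) ^ 2 := by
    rw [Finset.Icc_add_one_left_eq_Ioc, Finset.Icc_add_one_left_eq_Ioc, Finset.Icc_add_one_left_eq_Ioc]
    exact (Finset.sum_Ioc_consecutive _ (le_of_lt hss') (le_of_lt ht)).symm
  have hμ' : F s - F s' + ∑ i ∈ Finset.Icc (s + 1) s', (y i - μ) ^ 2 ≤ 0 := hμ
  simp only [Iset, ftilde, Set.mem_setOf_eq, hsplit]
  nlinarith [mul_nonpos_of_nonneg_of_nonpos hβ hg]
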